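/- Let p be a prime and let E and E′ be two nonempty p-homogeneous subsets of ℚ_p whose sets of admissible p-orders I_E and I_{E′} are bounded above. Then I_E = I_{E′} if and only if there exists a bijective isometric transformation f of ℚ_p such that f(E) = E′. -/

import Mathlib

noncomputable section

/-- The set of admissible `p`-orders of a set `E ⊆ ℚ_p`. -/
def pOrders (p : ℕ) [Fact p.Prime] (E : Set ℚ_[p]) : Set ℤ :=
  {n : ℤ | ∃ x ∈ E, ∃ y ∈ E, x ≠ y ∧ (x - y).valuation = n}

/-- `E ⊆ ℚ_p` is `p`-homogeneous. -/
def PHomogeneous (p : ℕ) [Fact p.Prime] (E : Set ℚ_[p]) : Prop :=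
  ∀ n ∈ pOrders p E, ∀ x ∈ E, ∀ t : ℕ, t < p →
    ∃ y ∈ E, ‖y - x - (t : ℚ_[p]) * (p : ℚ_[p]) ^ n‖ ≤ (p : ℝ) ^ (-(n + 1))

variable {p : ℕ} [Fact p.Prime]

namespace PadicHom

lemma one_lt_p : (1:ℝ) < p := by exact_mod_cast (Fact.out : p.Prime).one_lt

lemma norm_le_pow_iff_le_val {x : ℚ_[p]} (hx : x ≠ 0) (n : ℤ) :
    ‖x‖ ≤ (p:ℝ) ^ (-n) ↔ n ≤ x.valuation := by
  rw [Padic.norm_eq_zpow_neg_valuation hx, zpow_le_zpow_iff_right₀ one_lt_p, neg_le_neg_iff]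

lemma pow_pos' (n : ℤ) : (0:ℝ) < (p:ℝ)^n := zpow_pos (lt_trans one_pos one_lt_p) _

lemma zero_norm_le (n : ℤ) : ‖(0:ℚ_[p])‖ ≤ (p:ℝ)^(-n) := by
  rw [norm_zero]; exact (pow_pos' _).le

lemma pow_lt_pow' {m n : ℤ} (h : m < n) : (p:ℝ)^(-n) < (p:ℝ)^(-m) :=
  zpow_lt_zpow_right₀ one_lt_p (by omega)

lemma between {x : ℚ_[p]} {m : ℤ} (h1 : ‖x‖ ≤ (p:ℝ)^(-m))
    (h2 : ¬ (‖x‖ ≤ (p:ℝ)^(-(m+1)))) : x ≠ 0 ∧ x.valuation = m ∧ ‖x‖ = (p:ℝ)^(-m) := by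
  have hx : x ≠ 0 := by rintro rfl; exact h2 (zero_norm_le _)
  have v1 := (norm_le_pow_iff_le_val hx m).1 h1
  have v2 : ¬ (m + 1 ≤ x.valuation) := fun h => h2 ((norm_le_pow_iff_le_val hx _).2 h)
  have : x.valuation = m := by omega
  exact ⟨hx, this, by rw [Padic.norm_eq_zpow_neg_valuation hx, this]⟩

lemma add_le {x y : ℚ_[p]} {c : ℝ} (hx : ‖x‖ ≤ c) (hy : ‖y‖ ≤ c) : ‖x + y‖ ≤ c :=
  le_trans (Padic.nonarchimedean x y) (max_le hx hy)

lemma add_eq_right {x y : ℚ_[p]} (h : ‖x‖ < ‖y‖) : ‖x + y‖ = ‖y‖ := by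
  rw [Padic.add_eq_max_of_ne (ne_of_lt h), max_eq_right h.le]

lemma add_eq_left {x y : ℚ_[p]} (h : ‖y‖ < ‖x‖) : ‖x + y‖ = ‖x‖ := by
  rw [Padic.add_eq_max_of_ne (ne_of_gt h), max_eq_left h.le]

/-- digit existence -/
lemma exists_digit (w : ℚ_[p]) (m : ℤ) (hw : ‖w‖ ≤ (p:ℝ)^(-m)) :
    ∃ t : ℕ, t < p ∧ ‖w - (t:ℚ_[p]) * (p:ℚ_[p])^m‖ ≤ (p:ℝ)^(-(m+1)) := by
  have hp0 : (p:ℚ_[p]) ≠ 0 := by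
    exact_mod_cast Nat.cast_ne_zero.2 (Fact.out : p.Prime).ne_zero
  set c : ℚ_[p] := w * (p:ℚ_[p])^(-m) with hc
  have hnc : ‖c‖ ≤ 1 := by
    rw [hc, norm_mul, Padic.norm_p_zpow, neg_neg]
    calc ‖w‖ * (p:ℝ)^m ≤ (p:ℝ)^(-m) * (p:ℝ)^m := by
          exact mul_le_mul_of_nonneg_right hw (pow_pos' m).le
      _ = 1 := by rw [← zpow_add₀ (ne_of_gt (lt_trans one_pos one_lt_p)), neg_add_cancel, zpow_zero]
  set u : ℤ_[p] := ⟨c, hnc⟩ with hu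
  refine ⟨u.appr 1, by simpa using u.appr_lt 1, ?_⟩
  have hspec := PadicInt.appr_spec 1 u
  have h1 : ‖u - ((u.appr 1 : ℤ_[p]))‖ ≤ (p:ℝ)^(-(1:ℤ)) := by
    have := (PadicInt.norm_le_pow_iff_mem_span_pow (u - (u.appr 1 : ℤ_[p])) 1).2 hspec
    simpa using this
  have hcast : ((u - ((u.appr 1 : ℤ_[p])) : ℤ_[p]) : ℚ_[p]) = c - ((u.appr 1 : ℕ) : ℚ_[p]) := by
    rw [PadicInt.coe_sub, PadicInt.coe_natCast]
  have hcq : ‖c - ((u.appr 1 : ℕ) : ℚ_[p])‖ ≤ (p:ℝ)^(-(1:ℤ)) := by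
    rw [← hcast, PadicInt.padic_norm_e_of_padicInt]; exact h1
  have key : w - ((u.appr 1 : ℕ) : ℚ_[p]) * (p:ℚ_[p])^m
      = (c - ((u.appr 1 : ℕ) : ℚ_[p])) * (p:ℚ_[p])^m := by
    rw [hc, sub_mul, mul_assoc, ← zpow_add₀ hp0, neg_add_cancel, zpow_zero, mul_one]
  rw [key, norm_mul, Padic.norm_p_zpow]
  calc ‖c - ((u.appr 1 : ℕ) : ℚ_[p])‖ * (p:ℝ)^(-m) ≤ (p:ℝ)^(-(1:ℤ)) * (p:ℝ)^(-m) :=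
        mul_le_mul_of_nonneg_right hcq (pow_pos' _).le
    _ = (p:ℝ)^(-(m+1)) := by rw [← zpow_add₀ (ne_of_gt (lt_trans one_pos one_lt_p))]; ring_nf

/-- distinct digits are far apart -/
lemma digit_norm {t s : ℕ} (ht : t < p) (hs : s < p) (hne : t ≠ s) (m : ℤ) :
    ‖((t:ℚ_[p]) * (p:ℚ_[p])^m - (s:ℚ_[p]) * (p:ℚ_[p])^m)‖ = (p:ℝ)^(-m) := by
  have h1 : (t:ℚ_[p]) * (p:ℚ_[p])^m - (s:ℚ_[p]) * (p:ℚ_[p])^m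
      = (((t:ℤ) - s : ℤ) : ℚ_[p]) * (p:ℚ_[p])^m := by push_cast; ring
  have h2 : ‖((((t:ℤ) - s : ℤ)) : ℚ_[p])‖ = 1 := by
    refine le_antisymm (Padic.norm_int_le_one _) ?_
    by_contra h
    push_neg at h
    have hd := (Padic.norm_intCast_lt_one_iff (k := (t:ℤ) - s)).1 h
    have := Int.eq_zero_of_dvd_of_natAbs_lt_natAbs hd (by omega)
    omega
  rw [h1, norm_mul, h2, Padic.norm_p_zpow, one_mul]

lemma sub_le {x y : ℚ_[p]} {c : ℝ} (hx : ‖x‖ ≤ c) (hy : ‖y‖ ≤ c) : ‖x - y‖ ≤ c := by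
  rw [sub_eq_add_neg]; exact add_le hx (by rwa [norm_neg])

/-- points in distinct digit-children are at distance exactly p^(-m) -/
lemma digit_sep {a b c : ℚ_[p]} {m : ℤ} {t s : ℕ} (ht : t < p) (hs : s < p) (hne : t ≠ s)
    (ha : ‖a - c - (t:ℚ_[p]) * (p:ℚ_[p])^m‖ ≤ (p:ℝ)^(-(m+1)))
    (hb : ‖b - c - (s:ℚ_[p]) * (p:ℚ_[p])^m‖ ≤ (p:ℝ)^(-(m+1))) :
    ‖a - b‖ = (p:ℝ)^(-m) := by
  have key : a - b = ((t:ℚ_[p]) * (p:ℚ_[p])^m - (s:ℚ_[p]) * (p:ℚ_[p])^m)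
      + ((a - c - (t:ℚ_[p]) * (p:ℚ_[p])^m) - (b - c - (s:ℚ_[p]) * (p:ℚ_[p])^m)) := by ring
  rw [key, add_eq_left, digit_norm ht hs hne]
  rw [digit_norm ht hs hne]
  calc ‖a - c - (t:ℚ_[p]) * (p:ℚ_[p])^m - (b - c - (s:ℚ_[p]) * (p:ℚ_[p])^m)‖
      ≤ (p:ℝ)^(-(m+1)) := sub_le ha hb
    _ < (p:ℝ)^(-m) := pow_lt_pow' (by omega)

/-- the closed ball of radius p^(-n) as an additive subgroup -/
def pball (p : ℕ) [Fact p.Prime] (n : ℤ) : AddSubgroup ℚ_[p] where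
  carrier := {x | ‖x‖ ≤ (p:ℝ)^(-n)}
  add_mem' := fun hx hy => add_le hx hy
  zero_mem' := zero_norm_le n
  neg_mem' := fun hx => by simpa [norm_neg] using hx

/-- canonical representative of the coset of `z` modulo `p^n ℤ_p` -/
noncomputable def rep (p : ℕ) [Fact p.Prime] (n : ℤ) (z : ℚ_[p]) : ℚ_[p] :=
  Quotient.out (QuotientAddGroup.mk (s := pball p n) z)

lemma rep_spec (n : ℤ) (z : ℚ_[p]) : ‖rep p n z - z‖ ≤ (p:ℝ)^(-n) := by
  have h : QuotientAddGroup.mk (s := pball p n) (rep p n z)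
      = QuotientAddGroup.mk (s := pball p n) z := Quotient.out_eq _
  have := (QuotientAddGroup.eq (s := pball p n)).1 h
  have h3 : ‖-(rep p n z) + z‖ ≤ (p:ℝ)^(-n) := this
  have h2 : rep p n z - z = -(-(rep p n z) + z) := by ring
  rw [h2, norm_neg]
  exact h3

lemma rep_congr {n : ℤ} {z w : ℚ_[p]} (h : ‖z - w‖ ≤ (p:ℝ)^(-n)) :
    rep p n z = rep p n w := by
  unfold rep
  congr 1
  rw [QuotientAddGroup.eq]
  show -z + w ∈ {x : ℚ_[p] | ‖x‖ ≤ (p:ℝ)^(-n)}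
  have h2 : -z + w = -(z - w) := by ring
  rw [Set.mem_setOf_eq, h2, norm_neg]
  exact h

section Struct

variable {E : Set ℚ_[p]}

lemma mem_pOrders {x y : ℚ_[p]} (hx : x ∈ E) (hy : y ∈ E) (hne : x ≠ y) :
    (x - y).valuation ∈ pOrders p E := ⟨x, hx, y, hy, hne, rfl⟩

/-- monotonicity of "E meets the ball of level n around z" -/
lemma level_mono {z : ℚ_[p]} {n n' : ℤ} (h : n' ≤ n)
    (hP : ∃ x ∈ E, ‖z - x‖ ≤ (p:ℝ)^(-n)) : ∃ x ∈ E, ‖z - x‖ ≤ (p:ℝ)^(-n') := by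
  obtain ⟨x, hx, hn⟩ := hP
  exact ⟨x, hx, le_trans hn (zpow_le_zpow_right₀ one_lt_p.le (by omega))⟩

/-- points of E within p^{-(N+1)} coincide, N an upper bound for pOrders -/
lemma eq_of_close {N : ℤ} (hN : N ∈ upperBounds (pOrders p E)) {x y : ℚ_[p]}
    (hx : x ∈ E) (hy : y ∈ E) (h : ‖x - y‖ ≤ (p:ℝ)^(-(N+1))) : x = y := by
  by_contra hne
  have h0 : x - y ≠ 0 := sub_ne_zero.2 hne
  have := (norm_le_pow_iff_le_val h0 _).1 h
  have := hN (mem_pOrders hx hy hne)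
  omega

/-- existence of the maximal level at which E meets a ball around z ∉ E -/
lemma exists_max_level (hne : E.Nonempty) (hbdd : BddAbove (pOrders p E))
    {z : ℚ_[p]} (hz : z ∉ E) :
    ∃ m : ℤ, (∃ x ∈ E, ‖z - x‖ ≤ (p:ℝ)^(-m)) ∧
      ∀ n : ℤ, (∃ x ∈ E, ‖z - x‖ ≤ (p:ℝ)^(-n)) → n ≤ m := by
  obtain ⟨N, hN⟩ := hbdd
  set P : ℤ → Prop := fun n => ∃ x ∈ E, ‖z - x‖ ≤ (p:ℝ)^(-n) with hPdef
  have hPne : ∃ n, P n := by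
    obtain ⟨x0, hx0⟩ := hne
    have hzx : z - x0 ≠ 0 := sub_ne_zero.2 (fun h => hz (h ▸ hx0))
    exact ⟨(z - x0).valuation, x0, hx0, (norm_le_pow_iff_le_val hzx _).2 le_rfl⟩
  have hbd : ∃ b, ∀ n, P n → n ≤ b := by
    by_cases hP1 : P (N + 1)
    · obtain ⟨xs, hxs, hxsn⟩ := hP1
      have hzxs : z - xs ≠ 0 := sub_ne_zero.2 (fun h => hz (h ▸ hxs))
      refine ⟨(z - xs).valuation, fun n hPn => ?_⟩
      have hv1 : N + 1 ≤ (z - xs).valuation := (norm_le_pow_iff_le_val hzxs _).1 hxsn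
      by_cases hn : n ≤ N + 1
      · omega
      · obtain ⟨x, hx, hxn⟩ := hPn
        have hclose : ‖x - xs‖ ≤ (p:ℝ)^(-(N+1)) := by
          have h1 : x - xs = -(z - x) + (z - xs) := by ring
          rw [h1]
          refine add_le ?_ hxsn
          rw [norm_neg]
          exact le_trans hxn (zpow_le_zpow_right₀ one_lt_p.le (by omega))
        have := eq_of_close hN hx hxs hclose
        subst this
        exact (norm_le_pow_iff_le_val hzxs _).1 hxn
    · refine ⟨N + 1, fun n hPn => ?_⟩
      by_contra hc
      exact hP1 (level_mono (by omega) hPn)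
  obtain ⟨m, hm1, hm2⟩ := Int.exists_greatest_of_bdd (by obtain ⟨b, hb⟩ := hbd; exact ⟨b, hb⟩) hPne
  exact ⟨m, hm1, hm2⟩

/-- the maximal level of z ∉ E is not an admissible order -/
lemma max_level_not_mem (hhom : PHomogeneous p E) {z : ℚ_[p]} (hz : z ∉ E) {m : ℤ}
    (hm1 : ∃ x ∈ E, ‖z - x‖ ≤ (p:ℝ)^(-m))
    (hm2 : ∀ n : ℤ, (∃ x ∈ E, ‖z - x‖ ≤ (p:ℝ)^(-n)) → n ≤ m) :
    m ∉ pOrders p E := by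
  intro hmem
  obtain ⟨x, hx, hxn⟩ := hm1
  obtain ⟨t, ht, htd⟩ := exists_digit (z - x) m hxn
  obtain ⟨y, hy, hyd⟩ := hhom m hmem x hx t ht
  have : ‖z - y‖ ≤ (p:ℝ)^(-(m+1)) := by
    have h1 : z - y = (z - x - (t:ℚ_[p]) * (p:ℚ_[p])^m) - (y - x - (t:ℚ_[p]) * (p:ℚ_[p])^m) := by
      ring
    rw [h1]
    exact sub_le htd hyd
  have := hm2 (m+1) ⟨y, hy, this⟩
  omega

/-- two points of E at distance ≤ p^{-m}, m not an order, are at distance ≤ p^{-(m+1)} -/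
lemma gap_upgrade {x y : ℚ_[p]} (hx : x ∈ E) (hy : y ∈ E) {m : ℤ} (hm : m ∉ pOrders p E)
    (h : ‖x - y‖ ≤ (p:ℝ)^(-m)) : ‖x - y‖ ≤ (p:ℝ)^(-(m+1)) := by
  by_contra hc
  obtain ⟨hne, hval, -⟩ := between h hc
  exact hm (hval ▸ mem_pOrders hx hy (sub_ne_zero.1 hne))

lemma norm_natmul_le (t : ℕ) (m : ℤ) : ‖(t:ℚ_[p]) * (p:ℚ_[p])^m‖ ≤ (p:ℝ)^(-m) := by
  rw [norm_mul, Padic.norm_p_zpow]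
  have h1 : ‖((t:ℚ_[p]))‖ ≤ 1 := by
    have := Padic.norm_int_le_one (p := p) (t : ℤ)
    simpa using this
  calc ‖((t:ℚ_[p]))‖ * (p:ℝ)^(-m) ≤ 1 * (p:ℝ)^(-m) :=
        mul_le_mul_of_nonneg_right h1 (pow_pos' _).le
    _ = (p:ℝ)^(-m) := one_mul _

lemma digit_ball {a c : ℚ_[p]} {m : ℤ} {t : ℕ}
    (h : ‖a - c - (t:ℚ_[p]) * (p:ℚ_[p])^m‖ ≤ (p:ℝ)^(-(m+1))) : ‖a - c‖ ≤ (p:ℝ)^(-m) := by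
  have key : a - c = (a - c - (t:ℚ_[p]) * (p:ℚ_[p])^m) + (t:ℚ_[p]) * (p:ℚ_[p])^m := by ring
  rw [key]
  exact add_le (le_trans h (pow_lt_pow' (by omega)).le) (norm_natmul_le t m)

lemma digit_same {a b c : ℚ_[p]} {m : ℤ} {t : ℕ} {ε : ℝ}
    (ha : ‖a - c - (t:ℚ_[p]) * (p:ℚ_[p])^m‖ ≤ ε)
    (hb : ‖b - c - (t:ℚ_[p]) * (p:ℚ_[p])^m‖ ≤ ε) : ‖a - b‖ ≤ ε := by
  have key : a - b = (a - c - (t:ℚ_[p]) * (p:ℚ_[p])^m) - (b - c - (t:ℚ_[p]) * (p:ℚ_[p])^m) := by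
    ring
  rw [key]; exact sub_le ha hb

end Struct

section Match

variable {E E' : Set ℚ_[p]}

/-- an isometric partial matching between E and E' -/
def IsMatching (E E' : Set ℚ_[p]) (R : Set (ℚ_[p] × ℚ_[p])) : Prop :=
  (∀ q ∈ R, q.1 ∈ E ∧ q.2 ∈ E') ∧ ∀ q ∈ R, ∀ r ∈ R, ‖q.2 - r.2‖ = ‖q.1 - r.1‖

lemma matching_extend (hne' : E'.Nonempty) (hhom' : PHomogeneous p E')
    (hord : pOrders p E = pOrders p E') (hbdd : BddAbove (pOrders p E))
    {R : Set (ℚ_[p] × ℚ_[p])} (hR : IsMatching E E' R) {x : ℚ_[p]} (hx : x ∈ E)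
    (hxd : ∀ q ∈ R, q.1 ≠ x) :
    ∃ y' ∈ E', ∀ q ∈ R, ‖y' - q.2‖ = ‖x - q.1‖ := by
  rcases R.eq_empty_or_nonempty with rfl | ⟨q1, hq1⟩
  · obtain ⟨y', hy'⟩ := hne'
    exact ⟨y', hy', fun q hq => absurd hq (Set.notMem_empty q)⟩
  obtain ⟨N, hN⟩ := hbdd
  -- maximal valuation of x - q.1 over q ∈ R
  have hvmem : ∀ q ∈ R, (x - q.1).valuation ∈ pOrders p E := by
    intro q hq
    exact mem_pOrders hx (hR.1 q hq).1 (Ne.symm (hxd q hq))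
  obtain ⟨m, hm, hmax⟩ := Int.exists_greatest_of_bdd
    (P := fun n => ∃ q ∈ R, (x - q.1).valuation = n)
    ⟨N, fun n ⟨q, hq, hqv⟩ => hqv ▸ hN (hvmem q hq)⟩
    ⟨(x - q1.1).valuation, q1, hq1, rfl⟩
  obtain ⟨q0, hq0, hq0v⟩ := hm
  set a0 := q0.1
  set a0' := q0.2
  have hxa0 : x - a0 ≠ 0 := sub_ne_zero.2 (fun h => hxd q0 hq0 h.symm)
  have hna0 : ‖x - a0‖ = (p:ℝ)^(-m) := by rw [Padic.norm_eq_zpow_neg_valuation hxa0, hq0v]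
  -- the attained-level pairs are in the ball of a0' at level m
  have hball : ∀ q ∈ R, (x - q.1).valuation = m → ‖q.2 - a0'‖ ≤ (p:ℝ)^(-m) := by
    intro q hq hqv
    have h1 : ‖q.1 - a0‖ ≤ (p:ℝ)^(-m) := by
      have key : q.1 - a0 = -(x - q.1) + (x - a0) := by ring
      rw [key]
      refine add_le ?_ hna0.le
      rw [norm_neg, Padic.norm_eq_zpow_neg_valuation (sub_ne_zero.2 (fun h => hxd q hq h.symm)), hqv]
    rw [hR.2 q hq q0 hq0]
    exact h1
  -- digit of x relative to a0
  obtain ⟨tx, htx, htxd⟩ := exists_digit (x - a0) m hna0.le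
  -- there is a free digit
  have hfree : ∃ t : ℕ, t < p ∧ ∀ q ∈ R, (x - q.1).valuation = m →
      ¬ (‖q.2 - a0' - (t:ℚ_[p]) * (p:ℚ_[p])^m‖ ≤ (p:ℝ)^(-(m+1))) := by
    by_contra hc
    push_neg at hc
    choose w hw1 hw2 hw3 using hc
    -- digits of the E-side witnesses
    have hwb : ∀ t (ht : t < p), ‖(w t ht).1 - a0‖ ≤ (p:ℝ)^(-m) := by
      intro t ht
      rw [← hR.2 (w t ht) (hw1 t ht) q0 hq0]
      exact digit_ball (hw3 t ht)
    have hdig : ∀ t (ht : t < p), ∃ s : ℕ, s < p ∧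
        ‖(w t ht).1 - a0 - (s:ℚ_[p]) * (p:ℚ_[p])^m‖ ≤ (p:ℝ)^(-(m+1)) := by
      intro t ht
      exact exists_digit _ m (hwb t ht)
    choose dig hdig1 hdig2 using hdig
    -- dig is injective and misses tx : impossible by counting
    have hinj : ∀ t (ht : t < p) t' (ht' : t' < p), dig t ht = dig t' ht' → t = t' := by
      intro t ht t' ht' hdd
      by_contra hne
      have h1 : ‖(w t ht).1 - (w t' ht').1‖ ≤ (p:ℝ)^(-(m+1)) := by
        have := hdig2 t' ht'
        rw [← hdd] at this
        exact digit_same (hdig2 t ht) this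
      have h2 : ‖(w t ht).2 - (w t' ht').2‖ ≤ (p:ℝ)^(-(m+1)) := by
        rw [hR.2 (w t ht) (hw1 t ht) (w t' ht') (hw1 t' ht')]
        exact h1
      have h3 : ‖(w t ht).2 - (w t' ht').2‖ = (p:ℝ)^(-m) :=
        digit_sep ht ht' hne (hw3 t ht) (hw3 t' ht')
      rw [h3] at h2
      exact absurd h2 (not_le.2 (pow_lt_pow' (by omega)))
    have hmiss : ∀ t (ht : t < p), dig t ht ≠ tx := by
      intro t ht hdd
      have h1 : ‖x - (w t ht).1‖ ≤ (p:ℝ)^(-(m+1)) := by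
        have := hdig2 t ht
        rw [hdd] at this
        exact digit_same htxd this
      have hne0 : x - (w t ht).1 ≠ 0 := sub_ne_zero.2 (fun h => hxd _ (hw1 t ht) h.symm)
      have := (norm_le_pow_iff_le_val hne0 _).1 h1
      have := hw2 t ht
      omega
    -- counting within Finset.range p
    classical
    have hcard : (Finset.range p).card ≤ ((Finset.range p).erase tx).card := by
      refine Finset.card_le_card_of_injOn
        (fun t => if ht : t < p then dig t ht else 0) ?_ ?_
      · intro t ht
        simp only [Finset.mem_coe, Finset.mem_range] at ht
        simp only [dif_pos ht, Finset.mem_coe]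
        exact Finset.mem_erase.2 ⟨hmiss t ht, Finset.mem_range.2 (hdig1 t ht)⟩
      · intro t ht t' ht' heq
        simp only [Finset.mem_coe, Finset.mem_range] at ht ht'
        simp only [dif_pos ht, dif_pos ht'] at heq
        exact hinj t ht t' ht' heq
    rw [Finset.card_erase_of_mem (Finset.mem_range.2 htx), Finset.card_range] at hcard
    have hp2 : 2 ≤ p := (Fact.out : p.Prime).two_le
    omega
  obtain ⟨t, ht, htfree⟩ := hfree
  -- apply homogeneity of E' at a0'
  have hmord : m ∈ pOrders p E' := by
    rw [← hord, ← hq0v]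
    exact hvmem q0 hq0
  obtain ⟨y', hy', hy'd⟩ := hhom' m hmord a0' (hR.1 q0 hq0).2 t ht
  have hy'd' : ‖y' - a0' - (t:ℚ_[p]) * (p:ℚ_[p])^m‖ ≤ (p:ℝ)^(-(m+1)) := hy'd
  refine ⟨y', hy', fun q hq => ?_⟩
  have hq1x : x - q.1 ≠ 0 := sub_ne_zero.2 (fun h => hxd q hq h.symm)
  have hvq : (x - q.1).valuation ≤ m := hmax _ ⟨q, hq, rfl⟩
  have hnq : ‖x - q.1‖ = (p:ℝ)^(-(x - q.1).valuation) := Padic.norm_eq_zpow_neg_valuation hq1x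
  rcases eq_or_lt_of_le hvq with hvqm | hvqm
  · -- attained level : digits differ
    obtain ⟨s, hs, hsd⟩ := exists_digit (q.2 - a0') m (hball q hq hvqm)
    have hst : s ≠ t := by
      intro h
      exact htfree q hq hvqm (h ▸ hsd)
    have := digit_sep ht hs hst.symm hy'd' hsd
    rw [this, hnq, hvqm]
  · -- lower level
    set vq := (x - q.1).valuation
    have hq1a0 : ‖q.1 - a0‖ = (p:ℝ)^(-vq) := by
      have key : q.1 - a0 = -(x - q.1) + (x - a0) := by ring
      rw [key, add_eq_left, norm_neg, hnq]
      rw [norm_neg, hnq, hna0]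
      exact pow_lt_pow' hvqm
    have hq2a0 : ‖q.2 - a0'‖ = (p:ℝ)^(-vq) := by rw [hR.2 q hq q0 hq0]; exact hq1a0
    have hy'a0 : ‖y' - a0'‖ ≤ (p:ℝ)^(-m) := digit_ball hy'd'
    have key : y' - q.2 = (y' - a0') + -(q.2 - a0') := by ring
    rw [key, add_eq_right, norm_neg, hq2a0, hnq]
    rw [norm_neg, hq2a0]
    exact lt_of_le_of_lt hy'a0 (pow_lt_pow' hvqm)

lemma matching_insert {R : Set (ℚ_[p] × ℚ_[p])} (hR : IsMatching E E' R)
    {x y' : ℚ_[p]} (hx : x ∈ E) (hy' : y' ∈ E')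
    (hd : ∀ q ∈ R, ‖y' - q.2‖ = ‖x - q.1‖) : IsMatching E E' (insert (x, y') R) := by
  constructor
  · intro q hq
    rcases hq with rfl | hq
    · exact ⟨hx, hy'⟩
    · exact hR.1 q hq
  · intro q hq r hr
    rcases hq with rfl | hq
    · rcases hr with rfl | hr
      · simp
      · exact hd r hr
    · rcases hr with rfl | hr
      · show ‖q.2 - y'‖ = ‖q.1 - x‖
        rw [← norm_neg (q.2 - y'), ← norm_neg (q.1 - x), neg_sub, neg_sub]
        exact hd q hq
      · exact hR.2 q hq r hr

lemma exists_phi (hne : E.Nonempty) (hne' : E'.Nonempty)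
    (hhom : PHomogeneous p E) (hhom' : PHomogeneous p E')
    (hbdd : BddAbove (pOrders p E)) (hbdd' : BddAbove (pOrders p E'))
    (hord : pOrders p E = pOrders p E') :
    ∃ Φ : ℚ_[p] → ℚ_[p], (∀ x ∈ E, Φ x ∈ E') ∧
      (∀ x ∈ E, ∀ y ∈ E, ‖Φ x - Φ y‖ = ‖x - y‖) ∧
      (∀ y' ∈ E', ∃ x ∈ E, Φ x = y') := by
  classical
  have hZ : ∀ c ⊆ {R : Set (ℚ_[p] × ℚ_[p]) | IsMatching E E' R},
      IsChain (fun x1 x2 => x1 ⊆ x2) c →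
      ∃ ub ∈ {R : Set (ℚ_[p] × ℚ_[p]) | IsMatching E E' R}, ∀ s ∈ c, s ⊆ ub := by
    intro c hc hchain
    refine ⟨⋃₀ c, ⟨?_, ?_⟩, fun s hs => Set.subset_sUnion_of_mem hs⟩
    · rintro q ⟨R, hRc, hqR⟩
      exact (hc hRc).1 q hqR
    · rintro q ⟨R1, hR1c, hqR1⟩ r ⟨R2, hR2c, hrR2⟩
      by_cases h12 : R1 = R2
      · subst h12; exact (hc hR1c).2 q hqR1 r hrR2
      · rcases hchain hR1c hR2c h12 with h | h
        · exact (hc hR2c).2 q (h hqR1) r hrR2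
        · exact (hc hR1c).2 q hqR1 r (h hrR2)
  obtain ⟨M, hM⟩ := zorn_subset {R : Set (ℚ_[p] × ℚ_[p]) | IsMatching E E' R} hZ
  have hMm : IsMatching E E' M := hM.1
  -- every x ∈ E is in the domain
  have hdom : ∀ x ∈ E, ∃ x', (x, x') ∈ M := by
    intro x hx
    by_contra hcon
    push_neg at hcon
    have hxd : ∀ q ∈ M, q.1 ≠ x := by
      intro q hq h
      exact hcon q.2 (by rwa [← h, Prod.mk.eta])
    obtain ⟨y', hy', hy'd⟩ := matching_extend hne' hhom' hord hbdd hMm hx hxd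
    have hM' : IsMatching E E' (insert (x, y') M) := matching_insert hMm hx hy' hy'd
    have := hM.2 hM' (Set.subset_insert _ _)
    exact hcon y' (this (Set.mem_insert _ _))
  -- every y' ∈ E' is in the range
  have hran : ∀ y' ∈ E', ∃ x, (x, y') ∈ M := by
    intro y' hy'
    by_contra hcon
    push_neg at hcon
    have hyd : ∀ q ∈ M, q.2 ≠ y' := by
      intro q hq h
      exact hcon q.1 (by rwa [← h, Prod.mk.eta])
    set Msw : Set (ℚ_[p] × ℚ_[p]) := {q | (q.2, q.1) ∈ M} with hMsw
    have hMswm : IsMatching E' E Msw := by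
      constructor
      · intro q hq
        exact ⟨(hMm.1 _ hq).2, (hMm.1 _ hq).1⟩
      · intro q hq r hr
        exact (hMm.2 _ hq _ hr).symm
    have hxd : ∀ q ∈ Msw, q.1 ≠ y' := by
      intro q hq h
      exact hyd (q.2, q.1) hq (by simpa using h)
    obtain ⟨y, hy, hyd2⟩ := matching_extend hne hhom hord.symm hbdd' hMswm hy' hxd
    have hd : ∀ q ∈ M, ‖y' - q.2‖ = ‖y - q.1‖ := by
      intro q hq
      exact (hyd2 (q.2, q.1) (by simpa [hMsw] using hq)).symm
    have hM' : IsMatching E E' (insert (y, y') M) := matching_insert hMm hy hy' hd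
    have := hM.2 hM' (Set.subset_insert _ _)
    exact hcon y (this (Set.mem_insert _ _))
  refine ⟨fun z => if h : ∃ x', (z, x') ∈ M then h.choose else z, ?_, ?_, ?_⟩
  · intro x hx
    have h : ∃ x', (x, x') ∈ M := hdom x hx
    simp only [dif_pos h]
    exact (hMm.1 _ h.choose_spec).2
  · intro x hx y hy
    have h1 : ∃ x', (x, x') ∈ M := hdom x hx
    have h2 : ∃ x', (y, x') ∈ M := hdom y hy
    simp only [dif_pos h1, dif_pos h2]
    exact hMm.2 _ h1.choose_spec _ h2.choose_spec
  · intro y' hy'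
    obtain ⟨x, hxy⟩ := hran y' hy'
    have hx : x ∈ E := (hMm.1 _ hxy).1
    refine ⟨x, hx, ?_⟩
    have h : ∃ x', (x, x') ∈ M := ⟨y', hxy⟩
    simp only [dif_pos h]
    have h0 : ‖h.choose - y'‖ = 0 := by simpa using hMm.2 _ h.choose_spec _ hxy
    exact sub_eq_zero.1 (norm_eq_zero.1 h0)

lemma exists_isometry (hne : E.Nonempty) (hne' : E'.Nonempty)
    (hhom : PHomogeneous p E) (hhom' : PHomogeneous p E')
    (hbdd : BddAbove (pOrders p E)) (hbdd' : BddAbove (pOrders p E'))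
    (hord : pOrders p E = pOrders p E') :
    ∃ f : ℚ_[p] → ℚ_[p], Function.Bijective f ∧
      (∀ x y : ℚ_[p], ‖f x - f y‖ = ‖x - y‖) ∧ f '' E = E' := by
  classical
  obtain ⟨Φ, hΦ1, hΦ2, hΦ3⟩ := exists_phi hne hne' hhom hhom' hbdd hbdd' hord
  -- maximal level functions
  have hmEex : ∀ z : ℚ_[p], ∃ m : ℤ, z ∉ E →
      ((∃ x ∈ E, ‖z - x‖ ≤ (p:ℝ)^(-m)) ∧
        ∀ n : ℤ, (∃ x ∈ E, ‖z - x‖ ≤ (p:ℝ)^(-n)) → n ≤ m) := by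
    intro z
    by_cases hz : z ∈ E
    · exact ⟨0, fun h => absurd hz h⟩
    · obtain ⟨m, h1, h2⟩ := exists_max_level hne hbdd hz
      exact ⟨m, fun _ => ⟨h1, h2⟩⟩
  choose mE hmE using hmEex
  have hmE'ex : ∀ z : ℚ_[p], ∃ m : ℤ, z ∉ E' →
      ((∃ x ∈ E', ‖z - x‖ ≤ (p:ℝ)^(-m)) ∧
        ∀ n : ℤ, (∃ x ∈ E', ‖z - x‖ ≤ (p:ℝ)^(-n)) → n ≤ m) := by
    intro z
    by_cases hz : z ∈ E'
    · exact ⟨0, fun h => absurd hz h⟩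
    · obtain ⟨m, h1, h2⟩ := exists_max_level hne' hbdd' hz
      exact ⟨m, fun _ => ⟨h1, h2⟩⟩
  choose mE' hmE' using hmE'ex
  -- section functions
  have hsecEex : ∀ (n : ℤ) (c : ℚ_[p]), ∃ x : ℚ_[p],
      (∃ x' ∈ E, ‖c - x'‖ ≤ (p:ℝ)^(-n)) → (x ∈ E ∧ ‖c - x‖ ≤ (p:ℝ)^(-n)) := by
    intro n c
    by_cases h : ∃ x' ∈ E, ‖c - x'‖ ≤ (p:ℝ)^(-n)
    · obtain ⟨x, hx1, hx2⟩ := h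
      exact ⟨x, fun _ => ⟨hx1, hx2⟩⟩
    · exact ⟨0, fun hh => absurd hh h⟩
  choose secE hsecE using hsecEex
  have hsecE'ex : ∀ (n : ℤ) (c : ℚ_[p]), ∃ x : ℚ_[p],
      (∃ x' ∈ E', ‖c - x'‖ ≤ (p:ℝ)^(-n)) → (x ∈ E' ∧ ‖c - x‖ ≤ (p:ℝ)^(-n)) := by
    intro n c
    by_cases h : ∃ x' ∈ E', ‖c - x'‖ ≤ (p:ℝ)^(-n)
    · obtain ⟨x, hx1, hx2⟩ := h
      exact ⟨x, fun _ => ⟨hx1, hx2⟩⟩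
    · exact ⟨0, fun hh => absurd hh h⟩
  choose secE' hsecE' using hsecE'ex
  set xs : ℚ_[p] → ℚ_[p] := fun z => secE (mE z) (rep p (mE z) z) with hxsdef
  set ys : ℚ_[p] → ℚ_[p] := fun z => secE' (mE z) (rep p (mE z) (Φ (xs z))) with hysdef
  set f : ℚ_[p] → ℚ_[p] := fun z => if z ∈ E then Φ z else z - xs z + ys z with hfdef
  have hfE : ∀ z ∈ E, f z = Φ z := by
    intro z hz
    simp only [hfdef, if_pos hz]
  have hfnE : ∀ z, z ∉ E → f z = z - xs z + ys z := by
    intro z hz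
    simp only [hfdef, if_neg hz]
  -- basic facts about xs
  have hxsE : ∀ z, z ∉ E → xs z ∈ E ∧ ‖z - xs z‖ ≤ (p:ℝ)^(-(mE z)) := by
    intro z hz
    obtain ⟨⟨x, hx, hxn⟩, -⟩ := hmE z hz
    have hx2 : ‖rep p (mE z) z - x‖ ≤ (p:ℝ)^(-(mE z)) := by
      have key : rep p (mE z) z - x = (rep p (mE z) z - z) + (z - x) := by ring
      rw [key]
      exact add_le (rep_spec _ _) hxn
    obtain ⟨h1, h2⟩ := hsecE (mE z) (rep p (mE z) z) ⟨x, hx, hx2⟩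
    refine ⟨h1, ?_⟩
    have key : z - xs z = -(rep p (mE z) z - z) + (rep p (mE z) z - xs z) := by
      simp only [hxsdef]; ring
    rw [key]
    exact add_le (by rw [norm_neg]; exact rep_spec _ _) h2
  have hxsmax : ∀ z, z ∉ E → ∀ n : ℤ, (∃ x ∈ E, ‖z - x‖ ≤ (p:ℝ)^(-n)) → n ≤ mE z :=
    fun z hz => (hmE z hz).2
  have hxsnorm : ∀ z, z ∉ E → ‖z - xs z‖ = (p:ℝ)^(-(mE z)) := by
    intro z hz
    refine (between (hxsE z hz).2 ?_).2.2
    intro hc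
    have := hxsmax z hz (mE z + 1) ⟨xs z, (hxsE z hz).1, hc⟩
    omega
  have hnotord : ∀ z, z ∉ E → mE z ∉ pOrders p E := by
    intro z hz
    exact max_level_not_mem hhom hz (hmE z hz).1 (hmE z hz).2
  have hysE : ∀ z, z ∉ E → ys z ∈ E' ∧ ‖Φ (xs z) - ys z‖ ≤ (p:ℝ)^(-(mE z + 1)) := by
    intro z hz
    have hx1 : xs z ∈ E := (hxsE z hz).1
    have hw : ∃ x' ∈ E', ‖rep p (mE z) (Φ (xs z)) - x'‖ ≤ (p:ℝ)^(-(mE z)) :=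
      ⟨Φ (xs z), hΦ1 _ hx1, rep_spec _ _⟩
    obtain ⟨h1, h2⟩ := hsecE' (mE z) (rep p (mE z) (Φ (xs z))) hw
    have hy1 : ys z ∈ E' := h1
    refine ⟨hy1, ?_⟩
    have h3 : ‖Φ (xs z) - ys z‖ ≤ (p:ℝ)^(-(mE z)) := by
      have key : Φ (xs z) - ys z
          = -(rep p (mE z) (Φ (xs z)) - Φ (xs z)) + (rep p (mE z) (Φ (xs z)) - ys z) := by
        simp only [hysdef]; ring
      rw [key]
      exact add_le (by rw [norm_neg]; exact rep_spec _ _) h2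
    refine gap_upgrade (hΦ1 _ hx1) hy1 ?_ h3
    rw [← hord]
    exact hnotord z hz
  -- congruence of the sections
  have hcong : ∀ z w : ℚ_[p], mE z = mE w → ‖z - w‖ ≤ (p:ℝ)^(-(mE z)) →
      xs z = xs w ∧ ys z = ys w := by
    intro z w hm hzw
    have hrep : rep p (mE z) z = rep p (mE z) w := rep_congr hzw
    have h1 : xs z = xs w := by
      simp only [hxsdef]
      rw [← hm, hrep]
    exact ⟨h1, by simp only [hysdef]; rw [← hm, h1]⟩
  -- case B : z ∈ E, w ∉ E
  have hB : ∀ z w : ℚ_[p], z ∈ E → w ∉ E → ‖f z - f w‖ = ‖z - w‖ := by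
    intro z w hz hw
    have hzw : z ≠ w := fun h => hw (h ▸ hz)
    have hv0 : z - w ≠ 0 := sub_ne_zero.2 hzw
    have hnv : ‖z - w‖ = (p:ℝ)^(-(z - w).valuation) := Padic.norm_eq_zpow_neg_valuation hv0
    have hvm : (z - w).valuation ≤ mE w := by
      refine hxsmax w hw _ ⟨z, hz, ?_⟩
      rw [← norm_neg, neg_sub, hnv]
    have hnx : ‖w - xs w‖ = (p:ℝ)^(-(mE w)) := hxsnorm w hw
    have hkey : f z - f w = (Φ z - ys w) + (-(w - xs w)) := by
      rw [hfE z hz, hfnE w hw]; ring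
    rcases eq_or_lt_of_le hvm with hveq | hvlt
    · -- valuation = mE w
      have hzx : ‖z - xs w‖ ≤ (p:ℝ)^(-(mE w)) := by
        have key : z - xs w = (z - w) + (w - xs w) := by ring
        rw [key]
        exact add_le (by rw [hnv, hveq]) hnx.le
      have hzx2 : ‖z - xs w‖ ≤ (p:ℝ)^(-(mE w + 1)) :=
        gap_upgrade hz (hxsE w hw).1 (hnotord w hw) hzx
      have hΦzy : ‖Φ z - ys w‖ ≤ (p:ℝ)^(-(mE w + 1)) := by
        have key : Φ z - ys w = (Φ z - Φ (xs w)) + (Φ (xs w) - ys w) := by ring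
        rw [key]
        refine add_le ?_ (hysE w hw).2
        rw [hΦ2 z hz (xs w) (hxsE w hw).1]
        exact hzx2
      rw [hkey, add_eq_right, norm_neg, hnx, hnv, hveq]
      rw [norm_neg, hnx]
      exact lt_of_le_of_lt hΦzy (pow_lt_pow' (by omega))
    · -- valuation < mE w
      have hzx : ‖z - xs w‖ = (p:ℝ)^(-(z - w).valuation) := by
        have key : z - xs w = (z - w) + (w - xs w) := by ring
        rw [key, add_eq_left, hnv]
        rw [hnv, hnx]
        exact pow_lt_pow' hvlt
      have hΦzy : ‖Φ z - ys w‖ = (p:ℝ)^(-(z - w).valuation) := by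
        have key : Φ z - ys w = (Φ z - Φ (xs w)) + (Φ (xs w) - ys w) := by ring
        rw [key, add_eq_left, hΦ2 z hz (xs w) (hxsE w hw).1, hzx]
        rw [hΦ2 z hz (xs w) (hxsE w hw).1, hzx]
        exact lt_of_le_of_lt (hysE w hw).2 (pow_lt_pow' (by omega))
      rw [hkey, add_eq_left, hΦzy, hnv]
      rw [hΦzy, norm_neg, hnx]
      exact pow_lt_pow' hvlt
  -- case C : z ∉ E, w ∉ E, mE z ≤ mE w
  have hC : ∀ z w : ℚ_[p], z ∉ E → w ∉ E → z ≠ w → mE z ≤ mE w →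
      ‖f z - f w‖ = ‖z - w‖ := by
    intro z w hz hw hzw hm12
    have hv0 : z - w ≠ 0 := sub_ne_zero.2 hzw
    have hnv : ‖z - w‖ = (p:ℝ)^(-(z - w).valuation) := Padic.norm_eq_zpow_neg_valuation hv0
    have hn1 : ‖z - xs z‖ = (p:ℝ)^(-(mE z)) := hxsnorm z hz
    have hn2 : ‖w - xs w‖ = (p:ℝ)^(-(mE w)) := hxsnorm w hw
    by_cases hclose : ‖z - w‖ ≤ (p:ℝ)^(-(mE z + 1))
    · -- same maximal gap ball
      have hm2le : mE w ≤ mE z := by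
        by_contra hcc
        push_neg at hcc
        have h1 : ‖z - xs w‖ ≤ (p:ℝ)^(-(mE z + 1)) := by
          have key : z - xs w = (z - w) + (w - xs w) := by ring
          rw [key]
          refine add_le hclose (le_trans hn2.le ?_)
          exact zpow_le_zpow_right₀ one_lt_p.le (by omega)
        have := hxsmax z hz (mE z + 1) ⟨xs w, (hxsE w hw).1, h1⟩
        omega
      have hmeq : mE z = mE w := le_antisymm hm12 hm2le
      obtain ⟨hxe, hye⟩ := hcong z w hmeq
        (le_trans hclose (zpow_le_zpow_right₀ one_lt_p.le (by omega)))
      have heq : f z - f w = z - w := by rw [hfnE z hz, hfnE w hw, hxe, hye]; ring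
      rw [heq]
    · -- valuation of z - w is at most mE z
      have hvm1 : (z - w).valuation ≤ mE z := by
        by_contra hcc
        push_neg at hcc
        exact hclose ((norm_le_pow_iff_le_val hv0 _).2 (by omega))
      rcases eq_or_lt_of_le hvm1 with hveq | hvlt
      · -- valuation = mE z
        rcases eq_or_lt_of_le hm12 with hmeq | hmlt
        · -- mE z = mE w : same coset at level mE z
          obtain ⟨hxe, hye⟩ := hcong z w hmeq (by rw [hnv, hveq])
          have heq : f z - f w = z - w := by rw [hfnE z hz, hfnE w hw, hxe, hye]; ring
          rw [heq]
        · -- C2c : valuation = mE z < mE w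
          have hwx1 : ‖w - xs z‖ ≤ (p:ℝ)^(-(mE z)) := by
            have key : w - xs z = -(z - w) + (z - xs z) := by ring
            rw [key]
            exact add_le (by rw [norm_neg, hnv, hveq]) hn1.le
          have hwx1' : ‖w - xs z‖ ≤ (p:ℝ)^(-(mE z + 1)) := by
            by_contra hcc
            obtain ⟨hne0, hval, hnorm⟩ := between hwx1 hcc
            have hxx : xs z ≠ xs w := by
              intro h
              refine hcc ?_
              rw [h, hn2]
              exact zpow_le_zpow_right₀ one_lt_p.le (by omega)
            have hxxnorm : ‖xs z - xs w‖ = (p:ℝ)^(-(mE z)) := by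
              have key : xs z - xs w = -(w - xs z) + (w - xs w) := by ring
              rw [key, add_eq_left, norm_neg, hnorm]
              rw [norm_neg, hnorm, hn2]
              exact pow_lt_pow' (by omega)
            have hval2 : (xs z - xs w).valuation = mE z := by
              refine (between hxxnorm.le ?_).2.1
              rw [hxxnorm]
              exact not_le.2 (pow_lt_pow' (by omega))
            exact hnotord z hz (hval2 ▸ mem_pOrders (hxsE z hz).1 (hxsE w hw).1 hxx)
          have hxx2 : ‖xs z - xs w‖ ≤ (p:ℝ)^(-(mE z + 1)) := by
            have key : xs z - xs w = -(w - xs z) + (w - xs w) := by ring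
            rw [key]
            refine add_le (by rw [norm_neg]; exact hwx1') (le_trans hn2.le ?_)
            exact zpow_le_zpow_right₀ one_lt_p.le (by omega)
          have hyy : ‖ys z - ys w‖ ≤ (p:ℝ)^(-(mE z + 1)) := by
            have key : ys z - ys w
                = -(Φ (xs z) - ys z) + (Φ (xs z) - Φ (xs w)) + (Φ (xs w) - ys w) := by ring
            rw [key]
            refine add_le (add_le (by rw [norm_neg]; exact (hysE z hz).2) ?_)
              (le_trans (hysE w hw).2 (zpow_le_zpow_right₀ one_lt_p.le (by omega)))
            rw [hΦ2 _ (hxsE z hz).1 _ (hxsE w hw).1]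
            exact hxx2
          have hkey : f z - f w = (z - xs z) + (-(w - xs w) + (ys z - ys w)) := by
            rw [hfnE z hz, hfnE w hw]; ring
          have hsmall : ‖-(w - xs w) + (ys z - ys w)‖ ≤ (p:ℝ)^(-(mE z + 1)) := by
            refine add_le ?_ hyy
            rw [norm_neg]
            exact le_trans hn2.le (zpow_le_zpow_right₀ one_lt_p.le (by omega))
          rw [hkey, add_eq_left, hn1, hnv, hveq]
          rw [hn1]
          exact lt_of_le_of_lt hsmall (pow_lt_pow' (by omega))
      · -- C2a : valuation < mE z ≤ mE w
        have h1 : ‖-(z - xs z) + (z - w)‖ = (p:ℝ)^(-(z - w).valuation) := by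
          rw [add_eq_right, hnv]
          rw [norm_neg, hn1, hnv]
          exact pow_lt_pow' hvlt
        have hxxnorm : ‖xs z - xs w‖ = (p:ℝ)^(-(z - w).valuation) := by
          have key : xs z - xs w = (-(z - xs z) + (z - w)) + (w - xs w) := by ring
          rw [key, add_eq_left, h1]
          rw [h1, hn2]
          exact pow_lt_pow' (by omega)
        have h2 : ‖-(Φ (xs z) - ys z) + (Φ (xs z) - Φ (xs w))‖
            = (p:ℝ)^(-(z - w).valuation) := by
          rw [add_eq_right, hΦ2 _ (hxsE z hz).1 _ (hxsE w hw).1, hxxnorm]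
          rw [norm_neg, hΦ2 _ (hxsE z hz).1 _ (hxsE w hw).1, hxxnorm]
          exact lt_of_le_of_lt (hysE z hz).2 (pow_lt_pow' (by omega))
        have hyy : ‖ys z - ys w‖ = (p:ℝ)^(-(z - w).valuation) := by
          have key : ys z - ys w
              = (-(Φ (xs z) - ys z) + (Φ (xs z) - Φ (xs w))) + (Φ (xs w) - ys w) := by ring
          rw [key, add_eq_left, h2]
          rw [h2]
          exact lt_of_le_of_lt (hysE w hw).2 (pow_lt_pow' (by omega))
        have hkey : f z - f w = ((z - xs z) + (-(w - xs w))) + (ys z - ys w) := by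
          rw [hfnE z hz, hfnE w hw]; ring
        have h3 : ‖(z - xs z) + (-(w - xs w))‖ ≤ (p:ℝ)^(-(mE z)) := by
          refine add_le hn1.le ?_
          rw [norm_neg]
          exact le_trans hn2.le (zpow_le_zpow_right₀ one_lt_p.le (by omega))
        rw [hkey, add_eq_right, hyy, hnv]
        rw [hyy]
        exact lt_of_le_of_lt h3 (pow_lt_pow' hvlt)
  -- full isometry
  have hmain : ∀ z w : ℚ_[p], ‖f z - f w‖ = ‖z - w‖ := by
    intro z w
    by_cases hzw : z = w
    · rw [hzw]; simp
    by_cases hz : z ∈ E <;> by_cases hw : w ∈ E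
    · rw [hfE z hz, hfE w hw]; exact hΦ2 z hz w hw
    · exact hB z w hz hw
    · rw [← norm_neg (f z - f w), neg_sub, ← norm_neg (z - w), neg_sub]
      exact hB w z hw hz
    · rcases le_total (mE z) (mE w) with h | h
      · exact hC z w hz hw hzw h
      · rw [← norm_neg (f z - f w), neg_sub, ← norm_neg (z - w), neg_sub]
        exact hC w z hw hz (Ne.symm hzw) h
  -- surjectivity
  have hsurj : ∀ z' : ℚ_[p], ∃ z : ℚ_[p], f z = z' := by
    intro z'
    by_cases hz' : z' ∈ E'
    · obtain ⟨x, hx, hΦx⟩ := hΦ3 z' hz'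
      exact ⟨x, by rw [hfE x hx, hΦx]⟩
    · have hD := hmE' z' hz'
      have hmnot' : mE' z' ∉ pOrders p E' := max_level_not_mem hhom' hz' hD.1 hD.2
      have hmnotE : mE' z' ∉ pOrders p E := by rw [hord]; exact hmnot'
      obtain ⟨b', hb', hb'n⟩ := hD.1
      have hb'exact : ‖z' - b'‖ = (p:ℝ)^(-(mE' z')) := by
        refine (between hb'n ?_).2.2
        intro hc
        have := hD.2 (mE' z' + 1) ⟨b', hb', hc⟩
        omega
      obtain ⟨b, hb, hΦb⟩ := hΦ3 b' hb'
      obtain ⟨haE, han⟩ := hsecE (mE' z') (rep p (mE' z') b) ⟨b, hb, rep_spec _ _⟩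
      have hab : ‖b - secE (mE' z') (rep p (mE' z') b)‖ ≤ (p:ℝ)^(-(mE' z')) := by
        have key : b - secE (mE' z') (rep p (mE' z') b)
            = -(rep p (mE' z') b - b) + (rep p (mE' z') b - secE (mE' z') (rep p (mE' z') b)) := by
          ring
        rw [key]
        exact add_le (by rw [norm_neg]; exact rep_spec _ _) han
      obtain ⟨hyE, hyn⟩ := hsecE' (mE' z')
        (rep p (mE' z') (Φ (secE (mE' z') (rep p (mE' z') b))))
        ⟨Φ (secE (mE' z') (rep p (mE' z') b)), hΦ1 _ haE, rep_spec _ _⟩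
      have hΦay : ‖Φ (secE (mE' z') (rep p (mE' z') b))
          - secE' (mE' z') (rep p (mE' z') (Φ (secE (mE' z') (rep p (mE' z') b))))‖
          ≤ (p:ℝ)^(-(mE' z')) := by
        have key : Φ (secE (mE' z') (rep p (mE' z') b))
            - secE' (mE' z') (rep p (mE' z') (Φ (secE (mE' z') (rep p (mE' z') b))))
            = -(rep p (mE' z') (Φ (secE (mE' z') (rep p (mE' z') b)))
                - Φ (secE (mE' z') (rep p (mE' z') b)))
              + (rep p (mE' z') (Φ (secE (mE' z') (rep p (mE' z') b)))
                - secE' (mE' z') (rep p (mE' z') (Φ (secE (mE' z') (rep p (mE' z') b))))) := by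
          ring
        rw [key]
        exact add_le (by rw [norm_neg]; exact rep_spec _ _) hyn
      have hΦay' : ‖Φ (secE (mE' z') (rep p (mE' z') b))
          - secE' (mE' z') (rep p (mE' z') (Φ (secE (mE' z') (rep p (mE' z') b))))‖
          ≤ (p:ℝ)^(-(mE' z' + 1)) :=
        gap_upgrade (hΦ1 _ haE) hyE hmnot' hΦay
      have hΦab' : ‖Φ (secE (mE' z') (rep p (mE' z') b)) - b'‖ ≤ (p:ℝ)^(-(mE' z')) := by
        have heq : ‖Φ (secE (mE' z') (rep p (mE' z') b)) - Φ b‖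
            = ‖secE (mE' z') (rep p (mE' z') b) - b‖ := hΦ2 _ haE _ hb
        rw [hΦb] at heq
        rw [heq, ← norm_neg, neg_sub]
        exact hab
      have hy0b' : ‖secE' (mE' z') (rep p (mE' z') (Φ (secE (mE' z') (rep p (mE' z') b)))) - b'‖
          ≤ (p:ℝ)^(-(mE' z' + 1)) := by
        refine gap_upgrade hyE hb' hmnot' ?_
        have key : secE' (mE' z') (rep p (mE' z') (Φ (secE (mE' z') (rep p (mE' z') b)))) - b'
            = -(Φ (secE (mE' z') (rep p (mE' z') b))
                - secE' (mE' z') (rep p (mE' z') (Φ (secE (mE' z') (rep p (mE' z') b)))))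
              + (Φ (secE (mE' z') (rep p (mE' z') b)) - b') := by ring
        rw [key]
        exact add_le (by rw [norm_neg]; exact hΦay) hΦab'
      -- the preimage candidate
      set a : ℚ_[p] := secE (mE' z') (rep p (mE' z') b) with hadef
      set y0 : ℚ_[p] := secE' (mE' z') (rep p (mE' z') (Φ a)) with hy0def
      set z : ℚ_[p] := z' - y0 + a with hzdef
      have hza : ‖z - a‖ = (p:ℝ)^(-(mE' z')) := by
        have key : z - a = (z' - b') + (-(y0 - b')) := by rw [hzdef]; ring
        rw [key, add_eq_left, hb'exact]
        rw [norm_neg, hb'exact]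
        exact lt_of_le_of_lt hy0b' (pow_lt_pow' (by omega))
      have hzE : z ∉ E := by
        intro hzE
        have hzane : z ≠ a := by
          intro h
          rw [h, sub_self, norm_zero] at hza
          exact absurd hza.symm (ne_of_gt (pow_pos' _))
        have hval : (z - a).valuation = mE' z' := by
          refine (between hza.le ?_).2.1
          rw [hza]
          exact not_le.2 (pow_lt_pow' (by omega))
        exact hmnotE (hval ▸ mem_pOrders hzE haE hzane)
      have hmz : mE z = mE' z' := by
        have hge : mE' z' ≤ mE z := hxsmax z hzE _ ⟨a, haE, hza.le⟩
        have hle : mE z ≤ mE' z' := by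
          by_contra hcc
          push_neg at hcc
          obtain ⟨⟨xd, hxd, hxdn⟩, -⟩ := hmE z hzE
          have hxd1 : ‖z - xd‖ ≤ (p:ℝ)^(-(mE' z' + 1)) :=
            le_trans hxdn (zpow_le_zpow_right₀ one_lt_p.le (by omega))
          have hxda : ‖xd - a‖ ≤ (p:ℝ)^(-(mE' z')) := by
            have key : xd - a = -(z - xd) + (z - a) := by ring
            rw [key]
            refine add_le ?_ hza.le
            rw [norm_neg]
            exact le_trans hxd1 (zpow_le_zpow_right₀ one_lt_p.le (by omega))
          have hxda' : ‖xd - a‖ ≤ (p:ℝ)^(-(mE' z' + 1)) :=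
            gap_upgrade hxd haE hmnotE hxda
          have hfar : ‖z' - Φ xd‖ ≤ (p:ℝ)^(-(mE' z' + 1)) := by
            have key : z' - Φ xd = (z - xd) + (xd - a) + (y0 - Φ a) + (Φ a - Φ xd) := by
              rw [hzdef]; ring
            rw [key]
            refine add_le (add_le (add_le hxd1 hxda') ?_) ?_
            · rw [← norm_neg, neg_sub]
              exact hΦay'
            · rw [hΦ2 _ haE _ hxd, ← norm_neg, neg_sub]
              exact hxda'
          have := hD.2 (mE' z' + 1) ⟨Φ xd, hΦ1 xd hxd, hfar⟩
          omega
        omega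
      have hzb : ‖z - b‖ ≤ (p:ℝ)^(-(mE' z')) := by
        have key : z - b = (z - a) + (-(b - a)) := by ring
        rw [key]
        exact add_le hza.le (by rw [norm_neg]; exact hab)
      have hxsz : xs z = a := by
        simp only [hxsdef]
        rw [hmz, rep_congr hzb]
      have hysz : ys z = y0 := by
        simp only [hysdef]
        rw [hmz, hxsz]
      refine ⟨z, ?_⟩
      rw [hfnE z hzE, hxsz, hysz, hzdef]
      ring
  -- the image of E
  have himg : f '' E = E' := by
    apply Set.eq_of_subset_of_subset
    · rintro y ⟨x, hx, rfl⟩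
      rw [hfE x hx]
      exact hΦ1 x hx
    · intro y hy
      obtain ⟨x, hx, hΦx⟩ := hΦ3 y hy
      exact ⟨x, hx, by rw [hfE x hx, hΦx]⟩
  refine ⟨f, ⟨?_, hsurj⟩, hmain, himg⟩
  intro a b hab
  have := hmain a b
  rw [hab, sub_self, norm_zero] at this
  exact sub_eq_zero.1 (norm_eq_zero.1 this.symm)

end Match

lemma val_eq_of_norm_eq {x y : ℚ_[p]} (hx : x ≠ 0) (hy : y ≠ 0) (h : ‖x‖ = ‖y‖) :
    x.valuation = y.valuation := by
  have h1 : y.valuation ≤ x.valuation := by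
    refine (norm_le_pow_iff_le_val hx _).1 ?_
    rw [h, Padic.norm_eq_zpow_neg_valuation hy]
  have h2 : x.valuation ≤ y.valuation := by
    refine (norm_le_pow_iff_le_val hy _).1 ?_
    rw [← h, Padic.norm_eq_zpow_neg_valuation hx]
  omega

end PadicHom


/-- two nonempty `p`-homogeneous sets with admissible `p`-orders bounded above
have the same admissible `p`-orders iff some bijective isometric transformation of `ℚ_p` maps
one onto the other. -/
theorem pHomogeneous_orders_eq_iff_isometric
    (p : ℕ) [Fact p.Prime] (E E' : Set ℚ_[p])
    (hne : E.Nonempty) (hne' : E'.Nonempty)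
    (hhom : PHomogeneous p E) (hhom' : PHomogeneous p E')
    (hbdd : BddAbove (pOrders p E)) (hbdd' : BddAbove (pOrders p E')) :
    pOrders p E = pOrders p E' ↔
      ∃ f : ℚ_[p] → ℚ_[p], Function.Bijective f ∧
        (∀ x y : ℚ_[p], ‖f x - f y‖ = ‖x - y‖) ∧ f '' E = E' := by
  constructor
  · intro hord
    exact PadicHom.exists_isometry hne hne' hhom hhom' hbdd hbdd' hord
  · rintro ⟨f, hbij, hiso, himg⟩
    apply Set.eq_of_subset_of_subset
    · rintro n ⟨x, hx, y, hy, hxy, rfl⟩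
      have hfx : f x ∈ E' := himg ▸ Set.mem_image_of_mem f hx
      have hfy : f y ∈ E' := himg ▸ Set.mem_image_of_mem f hy
      have hnorm : ‖f x - f y‖ = ‖x - y‖ := hiso x y
      have hxy0 : x - y ≠ 0 := sub_ne_zero.2 hxy
      have hfxy0 : f x - f y ≠ 0 := sub_ne_zero.2 (fun h => hxy (hbij.1 h))
      exact ⟨f x, hfx, f y, hfy, sub_ne_zero.1 hfxy0,
        PadicHom.val_eq_of_norm_eq hfxy0 hxy0 hnorm⟩
    · rintro n ⟨x', hx', y', hy', hxy', rfl⟩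
      rw [← himg] at hx' hy'
      obtain ⟨x, hx, rfl⟩ := hx'
      obtain ⟨y, hy, rfl⟩ := hy'
      have hxy : x ≠ y := fun h => hxy' (h ▸ rfl)
      have hxy0 : x - y ≠ 0 := sub_ne_zero.2 hxy
      have hfxy0 : f x - f y ≠ 0 := sub_ne_zero.2 hxy'
      exact ⟨x, hx, y, hy, hxy, (PadicHom.val_eq_of_norm_eq hfxy0 hxy0 (hiso x y)).symm⟩
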